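/- Let d ≥ 9 be an integer such that every P5-free graph G with ω(G) ≥ 2 contains either: (i) a complete pair (X,Y) with ρ(X) ≥ y^9·ρ(G) and ρ(Y) ≥ (1−3y)·ρ(G) for some real y with 0 < y ≤ 1/4; or (ii) a complete blockade (B_1,…,B_k) for some integer k ≥ 2 such that ρ(B_i) ≥ k^{−d}·ρ(G) for all i ∈ [k]. Then every P5-free graph G satisfies α(G)·ω(G)^d ≥ |G|. -/

import Mathlib

open SimpleGraph

/-- The five-vertex path `P₅`. -/
def P5 : SimpleGraph (Fin 5) := SimpleGraph.fromRel (fun i j => (i : ℕ) + 1 = (j : ℕ))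

/-- A graph is `P₅`-free if it contains no induced copy of `P5`
(equivalently, no graph embedding of `P5`). -/
def P5Free {V : Type*} (G : SimpleGraph V) : Prop := IsEmpty (P5 ↪g G)

/-- A graph is `T`-free if it contains no induced copy of `T`. -/
def TFree {W V : Type*} (T : SimpleGraph W) (G : SimpleGraph V) : Prop := IsEmpty (T ↪g G)

/-- A stable (independent) set of vertices. -/
def IsStableSet {V : Type*} (G : SimpleGraph V) (s : Finset V) : Prop :=
  ∀ ⦃u⦄, u ∈ s → ∀ ⦃v⦄, v ∈ s → ¬ G.Adj u v

/-- The stability number `α(G)`. -/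
noncomputable def alphaNum {V : Type*} [Fintype V] (G : SimpleGraph V) : ℕ :=
  sSup {n | ∃ s : Finset V, IsStableSet G s ∧ s.card = n}

/-- The clique number `ω(G)`. -/
noncomputable def omegaNum {V : Type*} [Fintype V] (G : SimpleGraph V) : ℕ :=
  sSup {n | ∃ s : Finset V, G.IsClique (s : Set V) ∧ s.card = n}

/-- `ψ(G) = |G| / α(G)` (and `0` for the null graph). -/
noncomputable def psi {V : Type*} [Fintype V] (G : SimpleGraph V) : ℝ :=
  if Fintype.card V = 0 then 0 else (Fintype.card V : ℝ) / (alphaNum G : ℝ)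

/-- `ψ(S)` for a vertex subset `S`, i.e. `ψ(G[S])`. -/
noncomputable def psiSub {V : Type*} [Fintype V] (G : SimpleGraph V) (s : Finset V) : ℝ :=
  psi (G.induce (↑s : Set V))

/-- The Hall ratio `ρ(G)`: the maximum of `ψ(F)` over induced subgraphs `F` of `G`. -/
noncomputable def rho {V : Type*} [Fintype V] (G : SimpleGraph V) : ℝ :=
  ⨆ s : Finset V, psiSub G s

/-- `ρ(S)` for a vertex subset `S`, i.e. `ρ(G[S])`. -/
noncomputable def rhoSub {V : Type*} [Fintype V] (G : SimpleGraph V) (s : Finset V) : ℝ :=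
  rho (G.induce (↑s : Set V))

/-- `(A, B)` is a complete pair: disjoint, with every vertex of `A` adjacent to every
vertex of `B`. -/
def CompletePair {V : Type*} (G : SimpleGraph V) (A B : Finset V) : Prop :=
  Disjoint A B ∧ ∀ a ∈ A, ∀ b ∈ B, G.Adj a b

/-- `(A, B)` is an anticomplete pair: disjoint, with no edges between `A` and `B`. -/
def AnticompletePair {V : Type*} (G : SimpleGraph V) (A B : Finset V) : Prop :=
  Disjoint A B ∧ ∀ a ∈ A, ∀ b ∈ B, ¬ G.Adj a b

/-- A complete blockade: pairwise disjoint sets, pairwise complete to each other. -/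
def CompleteBlockade {V : Type*} (G : SimpleGraph V) {k : ℕ} (B : Fin k → Finset V) : Prop :=
  (∀ i j, i ≠ j → Disjoint (B i) (B j)) ∧
  (∀ i j, i ≠ j → ∀ a ∈ B i, ∀ b ∈ B j, G.Adj a b)

/-- An anticomplete blockade: pairwise disjoint sets, pairwise anticomplete to each other. -/
def AnticompleteBlockade {V : Type*} (G : SimpleGraph V) {k : ℕ} (B : Fin k → Finset V) : Prop :=
  (∀ i j, i ≠ j → Disjoint (B i) (B j)) ∧
  (∀ i j, i ≠ j → ∀ a ∈ B i, ∀ b ∈ B j, ¬ G.Adj a b)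

/-- The fractional chromatic number `χ*(G)`: the least `q ≥ 0` for which there are
nonnegative weights on the stable sets summing to `q` that cover every vertex with
total weight at least `1`. -/
noncomputable def fracChrom {V : Type*} [Fintype V] [DecidableEq V] (G : SimpleGraph V) : ℝ :=
  sInf {q : ℝ | 0 ≤ q ∧ ∃ x : Finset V → ℝ,
    (∀ s, 0 ≤ x s) ∧ (∀ s, ¬ IsStableSet G s → x s = 0) ∧
    (∑ s : Finset V, x s) = q ∧
    ∀ v : V, 1 ≤ ∑ s ∈ Finset.univ.filter (fun s : Finset V => v ∈ s), x s}

/-- `G` is `ε`-sparse: every vertex has degree at most `ε·|G|`. -/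
def EpsSparse {V : Type*} [Fintype V] (ε : ℝ) (G : SimpleGraph V) : Prop :=
  ∀ v : V, ((G.neighborSet v).ncard : ℝ) ≤ ε * (Fintype.card V : ℝ)

/-- `G` is `(1-ε)`-dense: the complement of `G` is `ε`-sparse. -/
def OneSubEpsDense {V : Type*} [Fintype V] (ε : ℝ) (G : SimpleGraph V) : Prop :=
  EpsSparse ε Gᶜ

/-- `G` is `ε`-restricted: `ε`-sparse or `(1-ε)`-dense. -/
def EpsRestricted {V : Type*} [Fintype V] (ε : ℝ) (G : SimpleGraph V) : Prop :=
  EpsSparse ε G ∨ OneSubEpsDense ε G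

/-- `G` is `(p,q)`-sparse: every induced subgraph `F` with `ρ(F) ≥ q` contains an
anticomplete pair `(X,Y)` with `ρ(X), ρ(Y) ≥ p`. -/
def PQSparse {V : Type*} [Fintype V] (G : SimpleGraph V) (p q : ℝ) : Prop :=
  ∀ s : Finset V, q ≤ rhoSub G s →
    ∃ X Y : Finset V, X ⊆ s ∧ Y ⊆ s ∧ AnticompletePair G X Y ∧
      p ≤ rhoSub G X ∧ p ≤ rhoSub G Y

/-- `φ_s = ∏_{i=1}^{s} (1 - 2^{-2^{i+1}})` (so `φ_0 = 1`). -/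
noncomputable def phi (s : ℕ) : ℝ :=
  ∏ i ∈ Finset.Icc 1 s, (1 - ((2:ℝ) ^ (2 ^ (i+1)))⁻¹)

/-- `φ_{r,s} = φ_s / φ_r`. -/
noncomputable def phiRS (r s : ℕ) : ℝ := phi s / phi r


set_option linter.unusedSectionVars false
set_option linter.unusedVariables false
set_option maxHeartbeats 1000000

section helpers
variable {V : Type*} [Fintype V] {G : SimpleGraph V}

lemma myCliqueBdd : BddAbove {n | ∃ s : Finset V, G.IsClique (s : Set V) ∧ s.card = n} :=
  ⟨Fintype.card V, by rintro n ⟨s, -, rfl⟩; exact Finset.card_le_univ s⟩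

lemma myClique_le_omega {s : Finset V} (hs : G.IsClique (s : Set V)) : s.card ≤ omegaNum G :=
  le_csSup myCliqueBdd ⟨s, hs, rfl⟩

lemma myExistsOmegaClique : ∃ s : Finset V, G.IsClique (s : Set V) ∧ s.card = omegaNum G := by
  have h0 : (0:ℕ) ∈ {n | ∃ s : Finset V, G.IsClique (s : Set V) ∧ s.card = n} := ⟨∅, by simp, rfl⟩
  exact Nat.sSup_mem ⟨0, h0⟩ myCliqueBdd

lemma myStableBdd : BddAbove {n | ∃ s : Finset V, IsStableSet G s ∧ s.card = n} :=
  ⟨Fintype.card V, by rintro n ⟨s, -, rfl⟩; exact Finset.card_le_univ s⟩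

lemma myStable_le_alpha {s : Finset V} (hs : IsStableSet G s) : s.card ≤ alphaNum G :=
  le_csSup myStableBdd ⟨s, hs, rfl⟩

lemma myExistsAlphaStable : ∃ s : Finset V, IsStableSet G s ∧ s.card = alphaNum G := by
  have h0 : (0:ℕ) ∈ {n | ∃ s : Finset V, IsStableSet G s ∧ s.card = n} :=
    ⟨∅, fun u hu => by simp at hu, rfl⟩
  exact Nat.sSup_mem ⟨0, h0⟩ myStableBdd

lemma myPsi_nonneg : 0 ≤ psi G := by
  unfold psi; split
  · exact le_refl 0
  · positivity

lemma myCardCoe (s : Finset V) : Fintype.card ↑(↑s : Set V) = s.card := by simp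

lemma myPsiSub_le_rho (s : Finset V) : psiSub G s ≤ rho G :=
  le_ciSup (Set.Finite.bddAbove (Set.finite_range _)) s

lemma myRho_le {M : ℝ} (hM : ∀ s : Finset V, psiSub G s ≤ M) : rho G ≤ M := ciSup_le hM

lemma myRho_nonneg : 0 ≤ rho G := le_trans myPsi_nonneg (myPsiSub_le_rho ∅)

lemma myRho_nonpos (h0 : Fintype.card V = 0) : rho G ≤ 0 := by
  apply myRho_le
  intro s
  unfold psiSub psi
  rw [if_pos]
  rw [myCardCoe]
  exact le_antisymm (le_trans (Finset.card_le_univ s) (le_of_eq h0)) (Nat.zero_le _)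

lemma myP5Free_induce (s : Set V) (h : P5Free G) : P5Free (G.induce s) := by
  constructor
  intro e
  exact h.false ((SimpleGraph.Embedding.induce s).comp e)

lemma myExistsCliqueIn (s : Finset V) :
    ∃ c : Finset V, c ⊆ s ∧ G.IsClique (c : Set V) ∧
      c.card = omegaNum (G.induce (↑s : Set V)) := by
  obtain ⟨c, hc, hcard⟩ := myExistsOmegaClique (G := G.induce (↑s : Set V))
  refine ⟨c.map (Function.Embedding.subtype _), ?_, ?_, by rw [Finset.card_map]; exact hcard⟩
  · intro x hx
    simp only [Finset.mem_map, Function.Embedding.coe_subtype] at hx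
    obtain ⟨⟨y, hy⟩, -, rfl⟩ := hx
    exact hy
  · intro x hx y hy hxy
    simp only [Finset.coe_map, Set.mem_image, Finset.mem_coe,
      Function.Embedding.coe_subtype] at hx hy
    obtain ⟨a, ha, rfl⟩ := hx
    obtain ⟨b, hb, rfl⟩ := hy
    have hab : a ≠ b := fun h => hxy (by rw [h])
    exact hc ha hb hab

lemma myStableIn (s : Finset V) :
    ∃ t : Finset V, (↑t : Set V) ⊆ (↑s : Set V) ∧ IsStableSet G t ∧
      t.card = alphaNum (G.induce (↑s : Set V)) := by
  obtain ⟨t, ht, hcard⟩ := myExistsAlphaStable (G := G.induce (↑s : Set V))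
  refine ⟨t.map (Function.Embedding.subtype _), ?_, ?_, by rw [Finset.card_map]; exact hcard⟩
  · intro x hx
    simp only [Finset.coe_map, Set.mem_image, Finset.mem_coe,
      Function.Embedding.coe_subtype] at hx
    obtain ⟨⟨y, hy⟩, -, rfl⟩ := hx
    exact hy
  · intro x hx y hy hadj
    simp only [Finset.mem_map, Function.Embedding.coe_subtype] at hx hy
    obtain ⟨a, ha, rfl⟩ := hx
    obtain ⟨b, hb, rfl⟩ := hy
    exact ht ha hb hadj

lemma myAlphaUniv (h : ∀ u v : V, ¬ G.Adj u v) : Fintype.card V ≤ alphaNum G := by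
  have : IsStableSet G Finset.univ := fun u _ v _ => h u v
  simpa using myStable_le_alpha this

end helpers

lemma myKey (t : ℝ) (h0 : 0 ≤ t) (h1 : t ≤ 1/4) : (1-t)^9 ≤ 1 - 3*t := by
  set u := 1 - t with hu
  have hu1 : u ≤ 1 := by simp only [hu]; linarith
  have hu0 : 3/4 ≤ u := by simp only [hu]; linarith
  have hsum : (3:ℝ) ≤ u^8+u^7+u^6+u^5+u^4+u^3+u^2+u+1 := by
    nlinarith [pow_le_pow_left₀ (by linarith : (0:ℝ) ≤ 3/4) hu0 2,
      pow_le_pow_left₀ (by linarith : (0:ℝ) ≤ 3/4) hu0 3,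
      pow_le_pow_left₀ (by linarith : (0:ℝ) ≤ 3/4) hu0 4,
      pow_nonneg (by linarith : (0:ℝ) ≤ u) 5, pow_nonneg (by linarith : (0:ℝ) ≤ u) 6,
      pow_nonneg (by linarith : (0:ℝ) ≤ u) 7, pow_nonneg (by linarith : (0:ℝ) ≤ u) 8]
  nlinarith [mul_nonneg (by linarith : (0:ℝ) ≤ 1-u)
    (by linarith : (0:ℝ) ≤ (u^8+u^7+u^6+u^5+u^4+u^3+u^2+u+1) - 3)]

lemma myNumeric (d a b w : ℕ) (hd : 9 ≤ d) (hab : a + b ≤ w) (y : ℝ)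
    (hy0 : 0 < y) (hy4 : y ≤ 1/4) :
    (a:ℝ)^d ≤ y^9 * (w:ℝ)^d ∨ (b:ℝ)^d ≤ (1-3*y) * (w:ℝ)^d := by
  by_contra hc
  push_neg at hc
  obtain ⟨h1, h2⟩ := hc
  obtain ⟨e, rfl⟩ : ∃ e, d = 9 + e := ⟨d - 9, by omega⟩
  set A := (a:ℝ) with hA
  set B := (b:ℝ) with hB
  set W := (w:ℝ) with hW
  have hA0 : 0 ≤ A := Nat.cast_nonneg a
  have hB0 : 0 ≤ B := Nat.cast_nonneg b
  have hW0 : 0 ≤ W := Nat.cast_nonneg w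
  have hABW : A + B ≤ W := by simp only [hA, hB, hW]; exact_mod_cast hab
  have h3y : (1:ℝ)/4 ≤ 1 - 3*y := by linarith
  -- W > 0
  have hBpos : 0 < B ^ (9+e) := lt_of_le_of_lt (by positivity) h2
  have hBpos' : 0 < B := by
    by_contra hb
    push_neg at hb
    have : B = 0 := le_antisymm hb hB0
    rw [this] at hBpos
    simp [zero_pow] at hBpos
  have hWpos : 0 < W := by linarith
  have hWd : 0 < W ^ (9+e) := by positivity
  rcases le_or_gt A (W/4) with hcase | hcase
  · -- A ≤ W/4
    have hAW : A ≤ W := by linarith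
    -- from h1: (y*W)^9 < A^9
    have hAe : A ^ (9+e) ≤ A^9 * W^e := by
      rw [pow_add]
      exact mul_le_mul_of_nonneg_left (pow_le_pow_left₀ hA0 hAW e) (by positivity)
    have hWe : (0:ℝ) < W^e := by positivity
    have h1' : (y*W)^9 * W^e < A^9 * W^e := by
      calc (y*W)^9 * W^e = y^9 * W^(9+e) := by rw [pow_add]; ring
      _ < A^(9+e) := h1
      _ ≤ A^9 * W^e := hAe
    have h1'' : (y*W)^9 < A^9 := lt_of_mul_lt_mul_right h1' (le_of_lt hWe)
    have hyWA : y*W < A := by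
      by_contra hle
      push_neg at hle
      exact absurd (pow_le_pow_left₀ hA0 hle 9) (not_le.mpr h1'')
    -- from h2: (1-3y) W^9 < (W-A)^9
    have hWA0 : 0 ≤ W - A := by linarith
    have hBe : B ^ (9+e) ≤ (W-A)^9 * W^e := by
      rw [pow_add]
      have hBWA : B ≤ W - A := by linarith
      exact mul_le_mul (pow_le_pow_left₀ hB0 hBWA 9)
        (pow_le_pow_left₀ hB0 (by linarith) e) (by positivity) (by positivity)
    have h2' : (1-3*y) * W^9 * W^e < (W-A)^9 * W^e := by
      calc (1-3*y) * W^9 * W^e = (1-3*y) * W^(9+e) := by rw [pow_add]; ring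
      _ < B^(9+e) := h2
      _ ≤ (W-A)^9 * W^e := hBe
    have h2'' : (1-3*y) * W^9 < (W-A)^9 := lt_of_mul_lt_mul_right h2' (le_of_lt hWe)
    -- key lemma with t = A/W
    have ht0 : 0 ≤ A/W := by positivity
    have ht1 : A/W ≤ 1/4 := by rw [div_le_iff₀ hWpos]; linarith
    have hk := myKey (A/W) ht0 ht1
    have hscaled : (W-A)^9 ≤ (1 - 3*(A/W)) * W^9 := by
      have : (W - A) = (1 - A/W) * W := by field_simp
      rw [this, mul_pow]
      exact mul_le_mul_of_nonneg_right hk (by positivity)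
    have hfin : (1-3*y) * W^9 < (1-3*(A/W)) * W^9 := lt_of_lt_of_le h2'' hscaled
    have h9 : (0:ℝ) < W^9 := by positivity
    have hlt := lt_of_mul_lt_mul_right hfin (le_of_lt h9)
    have hyAW : y < A/W := by rw [lt_div_iff₀ hWpos]; linarith [hyWA]
    linarith
  · -- A > W/4
    have hBWA : B ≤ W - A := by linarith
    have hB34 : B ≤ (3/4) * W := by linarith
    have hBle : B ^ (9+e) ≤ ((3/4)*W)^(9+e) := pow_le_pow_left₀ hB0 hB34 _
    have h34 : ((3:ℝ)/4)^(9+e) ≤ (3/4)^9 := by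
      rw [pow_add]
      nlinarith [pow_le_one₀ (by norm_num : (0:ℝ) ≤ 3/4) (by norm_num : (3:ℝ)/4 ≤ 1) (n := e),
        pow_nonneg (by norm_num : (0:ℝ) ≤ 3/4) 9, pow_nonneg (by norm_num : (0:ℝ) ≤ 3/4) e]
    have hchain : B ^ (9+e) ≤ (1/4) * W^(9+e) := by
      calc B ^ (9+e) ≤ ((3/4)*W)^(9+e) := hBle
      _ = (3/4)^(9+e) * W^(9+e) := by rw [mul_pow]
      _ ≤ (3/4)^9 * W^(9+e) := mul_le_mul_of_nonneg_right h34 (le_of_lt hWd)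
      _ ≤ (1/4) * W^(9+e) := mul_le_mul_of_nonneg_right (by norm_num) (le_of_lt hWd)
    have : (1/4 : ℝ) * W^(9+e) ≤ (1-3*y) * W^(9+e) :=
      mul_le_mul_of_nonneg_right h3y (le_of_lt hWd)
    linarith

lemma myAlphaPos {W : Type*} [Fintype W] (H : SimpleGraph W) (h : Fintype.card W ≠ 0) :
    0 < alphaNum H := by
  obtain ⟨v⟩ : Nonempty W := Fintype.card_pos_iff.mp (Nat.pos_of_ne_zero h)
  have hst : IsStableSet H {v} := by
    intro u hu w hw
    simp only [Finset.mem_singleton] at hu hw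
    subst hu; subst hw
    exact H.irrefl
  have := myStable_le_alpha hst
  have h1 : 1 ≤ alphaNum H := by simpa using this
  omega

lemma myOmegaPos {W : Type*} [Fintype W] (H : SimpleGraph W) (h : Fintype.card W ≠ 0) :
    1 ≤ omegaNum H := by
  obtain ⟨v⟩ : Nonempty W := Fintype.card_pos_iff.mp (Nat.pos_of_ne_zero h)
  have hcl : H.IsClique (↑({v} : Finset W) : Set W) := by simp
  have := myClique_le_omega hcl
  simpa using this

lemma myRhoSub_nonpos {V : Type*} [Fintype V] (G : SimpleGraph V) :
    rhoSub G (∅ : Finset V) ≤ 0 := by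
  unfold rhoSub
  exact myRho_nonpos (by simp)


lemma myMain (d : ℕ) (hd : 9 ≤ d)
    (h : ∀ (V : Type) [Fintype V] (G : SimpleGraph V), P5Free G → 2 ≤ omegaNum G →
      (∃ (X Y : Finset V) (y : ℝ), 0 < y ∧ y ≤ 1/4 ∧ CompletePair G X Y ∧
        y ^ 9 * rho G ≤ rhoSub G X ∧ (1 - 3 * y) * rho G ≤ rhoSub G Y) ∨
      (∃ (k : ℕ) (B : Fin k → Finset V), 2 ≤ k ∧ CompleteBlockade G B ∧
        ∀ i, ((k : ℝ) ^ d)⁻¹ * rho G ≤ rhoSub G (B i))) :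
    ∀ (n : ℕ) (V : Type) [Fintype V] (G : SimpleGraph V), Fintype.card V ≤ n →
      P5Free G → rho G ≤ (omegaNum G : ℝ) ^ d := by
  intro n
  induction n with
  | zero =>
    intro V _ G hcard _
    exact le_trans (myRho_nonpos (Nat.le_zero.mp hcard)) (by positivity)
  | succ n ih =>
    intro V _ G hcard hP5
    classical
    by_cases hV0 : Fintype.card V = 0
    · exact le_trans (myRho_nonpos hV0) (by positivity)
    by_cases hrho0 : rho G ≤ 0
    · exact le_trans hrho0 (by positivity)
    push_neg at hrho0
    by_cases hw : 2 ≤ omegaNum G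
    case neg =>
      have hadj : ∀ u v : V, ¬ G.Adj u v := by
        intro u v huv
        have hne : u ≠ v := G.ne_of_adj huv
        have hcl : G.IsClique (↑({u, v} : Finset V) : Set V) := by
          intro x hx y hy hxy
          simp only [Finset.coe_insert, Finset.coe_singleton, Set.mem_insert_iff,
            Set.mem_singleton_iff] at hx hy
          rcases hx with rfl | rfl <;> rcases hy with rfl | rfl
          · exact absurd rfl hxy
          · exact huv
          · exact huv.symm
          · exact absurd rfl hxy
        have := myClique_le_omega hcl
        rw [Finset.card_insert_of_notMem (by simpa using hne), Finset.card_singleton] at this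
        omega
      have hrho1 : rho G ≤ 1 := by
        apply myRho_le
        intro s
        unfold psiSub psi
        split
        · norm_num
        · rename_i hc
          rw [div_le_one]
          · have hstab : IsStableSet (G.induce (↑s : Set V)) Finset.univ := by
              intro u _ v _ hadj'
              exact hadj u.1 v.1 hadj'
            have := myStable_le_alpha hstab
            rw [Finset.card_univ] at this
            exact_mod_cast this
          · have := myAlphaPos (G.induce (↑s : Set V)) hc
            exact_mod_cast this
      have hω1 : (1:ℝ) ≤ (omegaNum G : ℝ) := by exact_mod_cast myOmegaPos G hV0
      calc rho G ≤ 1 := hrho1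
      _ ≤ (omegaNum G : ℝ) ^ d := one_le_pow₀ hω1
    case pos =>
      rcases h V G hP5 hw with ⟨X, Y, y, hy0, hy4, ⟨hdisj, hcomp⟩, hX, hY⟩ |
        ⟨k, B, hk2, ⟨hBdisj, hBcomp⟩, hB⟩
      · -- complete pair case
        have h3y : (0:ℝ) < 1 - 3*y := by linarith
        have hXne : X.Nonempty := by
          rw [Finset.nonempty_iff_ne_empty]
          rintro rfl
          have h1 : (0:ℝ) < y^9 * rho G := by positivity
          have h2 := myRhoSub_nonpos G
          linarith
        have hYne : Y.Nonempty := by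
          rw [Finset.nonempty_iff_ne_empty]
          rintro rfl
          have h1 : (0:ℝ) < (1 - 3*y) * rho G := by positivity
          have h2 := myRhoSub_nonpos G
          rw [show (1 - 3 * y) = 1 - 3*y by ring] at hY
          linarith
        have hcardXY : X.card + Y.card ≤ Fintype.card V := by
          rw [← Finset.card_union_of_disjoint hdisj]
          exact Finset.card_le_univ _
        have hXn : Fintype.card ↥(↑X : Set V) ≤ n := by
          rw [myCardCoe]
          have := hYne.card_pos
          omega
        have hYn : Fintype.card ↥(↑Y : Set V) ≤ n := by
          rw [myCardCoe]
          have := hXne.card_pos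
          omega
        set a := omegaNum (G.induce (↑X : Set V)) with ha
        set b := omegaNum (G.induce (↑Y : Set V)) with hb
        have hXrho : rhoSub G X ≤ (a : ℝ)^d := by
          rw [ha]
          unfold rhoSub
          apply ih _ (G.induce ↑X) hXn (myP5Free_induce _ hP5)
        have hYrho : rhoSub G Y ≤ (b : ℝ)^d := by
          rw [hb]
          unfold rhoSub
          apply ih _ (G.induce ↑Y) hYn (myP5Free_induce _ hP5)
        -- a + b ≤ ω
        obtain ⟨cX, hcXs, hcXcl, hcXcard⟩ := myExistsCliqueIn (G := G) X
        obtain ⟨cY, hcYs, hcYcl, hcYcard⟩ := myExistsCliqueIn (G := G) Y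
        have hclu : G.IsClique (↑(cX ∪ cY) : Set V) := by
          intro u hu v hv huv
          simp only [Finset.coe_union, Set.mem_union, Finset.mem_coe] at hu hv
          rcases hu with hu | hu <;> rcases hv with hv | hv
          · exact hcXcl hu hv huv
          · exact hcomp u (hcXs hu) v (hcYs hv)
          · exact (hcomp v (hcXs hv) u (hcYs hu)).symm
          · exact hcYcl hu hv huv
        have hab : a + b ≤ omegaNum G := by
          have hdc : Disjoint cX cY := hdisj.mono hcXs hcYs
          have := myClique_le_omega hclu
          rw [Finset.card_union_of_disjoint hdc, hcXcard, hcYcard] at this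
          exact this
        rcases myNumeric d a b (omegaNum G) hd hab y hy0 hy4 with hcase | hcase
        · have hy9 : (0:ℝ) < y^9 := by positivity
          have : y^9 * rho G ≤ y^9 * (omegaNum G : ℝ)^d := by
            calc y^9 * rho G ≤ rhoSub G X := hX
            _ ≤ (a:ℝ)^d := hXrho
            _ ≤ y^9 * (omegaNum G : ℝ)^d := hcase
          exact (mul_le_mul_iff_right₀ hy9).mp this
        · have : (1-3*y) * rho G ≤ (1-3*y) * (omegaNum G : ℝ)^d := by
            calc (1-3*y) * rho G ≤ rhoSub G Y := by
                  rw [show (1:ℝ)-3*y = 1 - 3*y by ring]; exact hY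
            _ ≤ (b:ℝ)^d := hYrho
            _ ≤ (1-3*y) * (omegaNum G : ℝ)^d := hcase
          exact (mul_le_mul_iff_right₀ h3y).mp this
      · -- blockade case
        have hk0 : 0 < k := by omega
        haveI : NeZero k := ⟨by omega⟩
        have hkpos : (0:ℝ) < ((k:ℝ)^d)⁻¹ := by positivity
        have hBne : ∀ i, (B i).Nonempty := by
          intro i
          rw [Finset.nonempty_iff_ne_empty]
          intro hE
          have h1 : (0:ℝ) < ((k:ℝ)^d)⁻¹ * rho G := by positivity
          have h2 := myRhoSub_nonpos G
          have := hB i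
          rw [hE] at this
          linarith
        haveI hnt : Nontrivial (Fin k) := by
          rw [Fin.nontrivial_iff_two_le]; exact hk2
        have hBn : ∀ i, Fintype.card ↥(↑(B i) : Set V) ≤ n := by
          intro i
          obtain ⟨j, hj⟩ := exists_ne i
          have hdBij : Disjoint (B i) (B j) := hBdisj i j (Ne.symm hj)
          have : (B i).card + (B j).card ≤ Fintype.card V := by
            rw [← Finset.card_union_of_disjoint hdBij]
            exact Finset.card_le_univ _
          have := (hBne j).card_pos
          rw [myCardCoe]
          omega
        set w : Fin k → ℕ := fun i => omegaNum (G.induce (↑(B i) : Set V)) with hwdef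
        have hBrho : ∀ i, rhoSub G (B i) ≤ (w i : ℝ)^d := by
          intro i
          rw [hwdef]
          unfold rhoSub
          apply ih _ (G.induce ↑(B i)) (hBn i) (myP5Free_induce _ hP5)
        -- sum of w ≤ ω
        have hsum : ∑ i, w i ≤ omegaNum G := by
          classical
          choose c hcs hccl hccard using fun i => myExistsCliqueIn (G := G) (B i)
          have hclu : G.IsClique (↑(Finset.univ.biUnion c) : Set V) := by
            intro u hu v hv huv
            simp only [Finset.coe_biUnion, Finset.coe_univ, Set.mem_iUnion, Finset.mem_coe,
              Set.mem_univ, Set.iUnion_true] at hu hv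
            obtain ⟨i, hu⟩ := hu
            obtain ⟨j, hv⟩ := hv
            by_cases hij : i = j
            · subst hij
              exact hccl i hu hv huv
            · exact hBcomp i j hij u (hcs i hu) v (hcs j hv)
          have hdisjc : ∀ i ∈ Finset.univ, ∀ j ∈ Finset.univ, i ≠ j → Disjoint (c i) (c j) :=
            fun i _ j _ hij => (hBdisj i j hij).mono (hcs i) (hcs j)
          have hcardU := Finset.card_biUnion hdisjc
          have hle := myClique_le_omega hclu
          rw [hcardU] at hle
          calc ∑ i, w i = ∑ i, (c i).card := by
                apply Finset.sum_congr rfl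
                intro i _
                simp only [hwdef]
                exact (hccard i).symm
          _ ≤ omegaNum G := hle
        obtain ⟨i0, -, hmin⟩ := Finset.exists_min_image Finset.univ w ⟨0, Finset.mem_univ 0⟩
        have hkw : k * w i0 ≤ omegaNum G := by
          calc k * w i0 = ∑ _i : Fin k, w i0 := by
                rw [Finset.sum_const, Finset.card_univ, Fintype.card_fin, smul_eq_mul]
          _ ≤ ∑ i, w i := Finset.sum_le_sum (fun i _ => hmin i (Finset.mem_univ i))
          _ ≤ omegaNum G := hsum
        have h1 : ((k:ℝ)^d)⁻¹ * rho G ≤ (w i0 : ℝ)^d := le_trans (hB i0) (hBrho i0)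
        have h2 : rho G ≤ (k:ℝ)^d * (w i0 : ℝ)^d := by
          have hkd : (0:ℝ) < (k:ℝ)^d := by positivity
          rw [← inv_mul_le_iff₀ hkd] at *
          exact h1
        calc rho G ≤ (k:ℝ)^d * (w i0 : ℝ)^d := h2
        _ = ((k * w i0 : ℕ) : ℝ)^d := by push_cast; rw [mul_pow]
        _ ≤ ((omegaNum G : ℕ) : ℝ)^d := by
            apply pow_le_pow_left₀ (by positivity)
            exact_mod_cast hkw

/-- If `d ≥ 9` is such that every `P₅`-free graph `G` with `ω(G) ≥ 2` contains
one of the two structures below, then every `P₅`-free graph `G` satisfies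
`α(G)·ω(G)^d ≥ |G|`. -/
theorem stmt_4 (d : ℕ) (hd : 9 ≤ d)
    (h : ∀ (V : Type) [Fintype V] (G : SimpleGraph V), P5Free G → 2 ≤ omegaNum G →
      (∃ (X Y : Finset V) (y : ℝ), 0 < y ∧ y ≤ 1/4 ∧ CompletePair G X Y ∧
        y ^ 9 * rho G ≤ rhoSub G X ∧ (1 - 3 * y) * rho G ≤ rhoSub G Y) ∨
      (∃ (k : ℕ) (B : Fin k → Finset V), 2 ≤ k ∧ CompleteBlockade G B ∧
        ∀ i, ((k : ℝ) ^ d)⁻¹ * rho G ≤ rhoSub G (B i))) :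
    ∀ (V : Type) [Fintype V] (G : SimpleGraph V), P5Free G →
      Fintype.card V ≤ alphaNum G * omegaNum G ^ d := by
  intro V _ G hP5
  by_cases hV0 : Fintype.card V = 0
  · rw [hV0]; exact Nat.zero_le _
  · have hmain := myMain d hd h (Fintype.card V) V G le_rfl hP5
    have hpsi := myPsiSub_le_rho (G := G) Finset.univ
    have hcards : Fintype.card ↥((↑(Finset.univ : Finset V)) : Set V) = Fintype.card V := by
      rw [myCardCoe, Finset.card_univ]
    obtain ⟨t, -, hst, hcardt⟩ := myStableIn (G := G) Finset.univ
    have ht : alphaNum (G.induce ((↑(Finset.univ : Finset V)) : Set V)) ≤ alphaNum G := by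
      rw [← hcardt]; exact myStable_le_alpha hst
    set A' := alphaNum (G.induce ((↑(Finset.univ : Finset V)) : Set V)) with hA'
    have hA'pos : 0 < A' := by
      rw [hA']
      exact myAlphaPos _ (by rw [hcards]; exact hV0)
    have hpsieq : psiSub G (Finset.univ : Finset V) = (Fintype.card V : ℝ) / (A' : ℝ) := by
      unfold psiSub psi
      rw [if_neg (by rw [hcards]; exact hV0), hcards]
    have hdiv : (Fintype.card V : ℝ) / (A' : ℝ) ≤ (omegaNum G : ℝ)^d := by
      rw [← hpsieq]; exact le_trans hpsi hmain
    have hfin : (Fintype.card V : ℝ) ≤ (A' : ℝ) * (omegaNum G : ℝ)^d := by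
      rw [div_le_iff₀ (by exact_mod_cast hA'pos : (0:ℝ) < (A' : ℝ))] at hdiv
      linarith [hdiv]
    have hAle : (A' : ℝ) * (omegaNum G : ℝ)^d ≤ (alphaNum G : ℝ) * (omegaNum G : ℝ)^d :=
      mul_le_mul_of_nonneg_right (by exact_mod_cast ht) (by positivity)
    have : (Fintype.card V : ℝ) ≤ ((alphaNum G * omegaNum G ^ d : ℕ) : ℝ) := by
      push_cast
      linarith
    exact_mod_cast this
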